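/- arXiv:1801.09863 — 2 statements merged into one kernel-verified Lean document; each statement's English description precedes it below -/
import Mathlib

section
/- Let m be a positive integer. If r ∈ W̄_4 · γ_5 F_m, then in the truncated algebra A_5 over ℤ/2ℤ one has E^2(r) = 1 + Σ_{(i_1,i_2,i_3,i_4)∈{1,…,m}^4} c(i_1,i_2,i_3,i_4) X_{i_1}X_{i_2}X_{i_3}X_{i_4} for some coefficients c(i_1,i_2,i_3,i_4) ∈ ℤ/2ℤ satisfying c(i_1,i_2,i_3,i_4) = c(i_{σ(1)},i_{σ(2)},i_{σ(3)},i_{σ(4)}) for every permutation σ of {1,2,3,4}; in particular, all homogeneous components of E^2(r) of degrees 1, 2 and 3 vanish. -/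
/-- `W_n`, the set of `n`-th powers in a group `G`. -/
def powSet (G : Type*) [Group G] (n : ℕ) : Set G := {x | ∃ w : G, x = w ^ n}

/-- `W̄_n`, the normal subgroup of the free group `F_m` generated by the set `W_n`
of `n`-th powers. -/
def Wbar (m n : ℕ) : Subgroup (FreeGroup (Fin m)) :=
  Subgroup.normalClosure (powSet (FreeGroup (Fin m)) n)

instance (m n : ℕ) : (Wbar m n).Normal := Subgroup.normalClosure_normal

/-- `W̄_n · γ_q F_m`: since both factors are normal subgroups of `F_m`, this product
subgroup equals the join.  (Recall `lowerCentralSeries G 0 = G = γ₁ G`, so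
`γ_q G = lowerCentralSeries G (q-1)`.) -/
def WbarGamma (m n q : ℕ) : Subgroup (FreeGroup (Fin m)) :=
  Wbar m n ⊔ Subgroup.lowerCentralSeries (⊤ : Subgroup (FreeGroup (Fin m))) (q - 1)

instance (m n q : ℕ) : (WbarGamma m n q).Normal := Subgroup.sup_normal _ _

/-- `F^q(m,n) = F_m / (W̄_n · γ_q F_m)`. -/
def BurnsideQuot (m n q : ℕ) : Type := FreeGroup (Fin m) ⧸ WbarGamma m n q

noncomputable instance (m n q : ℕ) : Group (BurnsideQuot m n q) :=
  QuotientGroup.Quotient.group _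

/-- The monomial `X_{w₁} ⋯ X_{w_l}` in the free associative `ZMod p`-algebra `T` on
noncommuting indeterminates `X_1, …, X_m`. -/
def magnusMonomial (p m : ℕ) (w : List (Fin m)) : FreeAlgebra (ZMod p) (Fin m) :=
  (w.map (FreeAlgebra.ι (ZMod p))).prod

/-- The relation generating (as a ring congruence) the two-sided ideal `I^k`, where
`I ⊆ T` is the two-sided ideal generated by `X_1, …, X_m`: every monomial of degree `k`
is set to `0`. -/
def truncRel (p m k : ℕ) :
    FreeAlgebra (ZMod p) (Fin m) → FreeAlgebra (ZMod p) (Fin m) → Prop :=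
  fun a b => ∃ w : List (Fin m), w.length = k ∧ a = magnusMonomial p m w ∧ b = 0

/-- The truncated algebra `A_k = T/I^k`. -/
abbrev TruncAlgebra (p m k : ℕ) := RingQuot (truncRel p m k)

/-- The quotient map `T → A_k`. -/
def truncMk (p m k : ℕ) :
    FreeAlgebra (ZMod p) (Fin m) →+* TruncAlgebra p m k :=
  RingQuot.mkRingHom _

lemma isUnit_one_add_X (p m k : ℕ) (i : Fin m) :
    IsUnit (1 + truncMk p m k (FreeAlgebra.ι (ZMod p) i)) := by
  refine IsNilpotent.isUnit_one_add ⟨k, ?_⟩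
  rw [← map_pow]
  have h1 : (FreeAlgebra.ι (ZMod p) i) ^ k = magnusMonomial p m (List.replicate k i) := by
    simp [magnusMonomial, List.map_replicate, List.prod_replicate]
  have h2 : truncMk p m k (magnusMonomial p m (List.replicate k i)) = truncMk p m k 0 :=
    RingQuot.mkRingHom_rel ⟨List.replicate k i, List.length_replicate, rfl, rfl⟩
  rw [h1, h2, map_zero]

/-- The Magnus `ZMod p`-expansion truncated at degree `k`: the unique group homomorphism
`E^p : F_m → A_kˣ` with `E^p(x_i) = 1 + X_i`. -/
noncomputable def magnus (p m k : ℕ) :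
    FreeGroup (Fin m) →* (TruncAlgebra p m k)ˣ :=
  FreeGroup.lift fun i => (isUnit_one_add_X p m k i).unit

/-- The coefficient of the monomial `X_{w₁} ⋯ X_{w_l}` in an element of the free
algebra `T`, via the canonical basis of `T` given by words in `X_1, …, X_m`. -/
noncomputable def magnusCoeff (p m : ℕ) (w : List (Fin m))
    (t : FreeAlgebra (ZMod p) (Fin m)) : ZMod p :=
  (FreeAlgebra.equivMonoidAlgebraFreeMonoid (R := ZMod p) (X := Fin m) t).coeff
    (FreeMonoid.ofList w)

/-! ### Auxiliary development -/

open FreeAlgebra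

namespace MagnusAux

variable {m : ℕ}

/-- Abbreviation for the canonical algebra equivalence. -/
noncomputable abbrev emb (m : ℕ) :
    FreeAlgebra (ZMod 2) (Fin m) ≃ₐ[ZMod 2] MonoidAlgebra (ZMod 2) (FreeMonoid (Fin m)) :=
  FreeAlgebra.equivMonoidAlgebraFreeMonoid

/-- All monomials appearing in `t` have length at least `j`. -/
def LowSupp (j : ℕ) (t : FreeAlgebra (ZMod 2) (Fin m)) : Prop :=
  ∀ w ∈ (emb m t).coeff.support, j ≤ FreeMonoid.length w

lemma lowSupp_zero (j : ℕ) : LowSupp j (0 : FreeAlgebra (ZMod 2) (Fin m)) := by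
  intro w hw
  simp [LowSupp] at hw

lemma lowSupp_trivial (t : FreeAlgebra (ZMod 2) (Fin m)) : LowSupp 0 t :=
  fun _ _ => Nat.zero_le _

lemma LowSupp.mono {i j : ℕ} {t : FreeAlgebra (ZMod 2) (Fin m)} (h : LowSupp j t)
    (hij : i ≤ j) : LowSupp i t :=
  fun w hw => le_trans hij (h w hw)

lemma LowSupp.add {j : ℕ} {a b : FreeAlgebra (ZMod 2) (Fin m)}
    (ha : LowSupp j a) (hb : LowSupp j b) : LowSupp j (a + b) := by
  classical
  intro w hw
  rw [map_add, MonoidAlgebra.coeff_add] at hw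
  rcases Finset.mem_union.1 (Finsupp.support_add hw) with h | h
  · exact ha w h
  · exact hb w h

lemma LowSupp.neg {j : ℕ} {a : FreeAlgebra (ZMod 2) (Fin m)}
    (ha : LowSupp j a) : LowSupp j (-a) := by
  intro w hw
  rw [map_neg, MonoidAlgebra.coeff_neg, Finsupp.support_neg] at hw
  exact ha w hw

lemma LowSupp.sub {j : ℕ} {a b : FreeAlgebra (ZMod 2) (Fin m)}
    (ha : LowSupp j a) (hb : LowSupp j b) : LowSupp j (a - b) := by
  rw [sub_eq_add_neg]; exact ha.add hb.neg

lemma LowSupp.smul {j : ℕ} {a : FreeAlgebra (ZMod 2) (Fin m)} (c : ZMod 2)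
    (ha : LowSupp j a) : LowSupp j (c • a) := by
  intro w hw
  rw [map_smul, MonoidAlgebra.coeff_smul] at hw
  exact ha w (Finsupp.support_smul hw)

lemma lowSupp_sum {j : ℕ} {ι : Type*} (s : Finset ι)
    (g : ι → FreeAlgebra (ZMod 2) (Fin m)) (h : ∀ i ∈ s, LowSupp j (g i)) :
    LowSupp j (∑ i ∈ s, g i) := by
  classical
  induction s using Finset.induction_on with
  | empty => simpa using lowSupp_zero j
  | insert _ _ hni ih =>
    rw [Finset.sum_insert hni]
    exact (h _ (Finset.mem_insert_self _ _)).add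
      (ih fun i hi => h i (Finset.mem_insert_of_mem hi))

lemma LowSupp.mul {i j : ℕ} {a b : FreeAlgebra (ZMod 2) (Fin m)}
    (ha : LowSupp i a) (hb : LowSupp j b) : LowSupp (i + j) (a * b) := by
  classical
  intro w hw
  rw [map_mul] at hw
  obtain ⟨x, hx, y, hy, rfl⟩ := Finset.mem_mul.1 (MonoidAlgebra.support_coeff_mul_subset _ _ hw)
  rw [FreeMonoid.length_mul]
  exact Nat.add_le_add (ha x hx) (hb y hy)

lemma LowSupp.pow {j : ℕ} {a : FreeAlgebra (ZMod 2) (Fin m)} (ha : LowSupp j a) :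
    ∀ n : ℕ, LowSupp (n * j) (a ^ n)
  | 0 => by
    rw [pow_zero, Nat.zero_mul]
    exact lowSupp_trivial 1
  | n + 1 => by
    rw [pow_succ, Nat.succ_mul]
    exact (ha.pow n).mul ha

lemma emb_ι (i : Fin m) :
    emb m (FreeAlgebra.ι (ZMod 2) i) = MonoidAlgebra.single (FreeMonoid.of i) 1 := by
  simp [emb, FreeAlgebra.equivMonoidAlgebraFreeMonoid]

lemma emb_monomial (w : List (Fin m)) :
    emb m (magnusMonomial 2 m w) = MonoidAlgebra.single (FreeMonoid.ofList w) 1 := by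
  induction w with
  | nil =>
    simp [magnusMonomial, MonoidAlgebra.one_def]
  | cons i w ih =>
    have : magnusMonomial 2 m (i :: w) =
        FreeAlgebra.ι (ZMod 2) i * magnusMonomial 2 m w := by
      simp [magnusMonomial]
    rw [this, map_mul, emb_ι, ih, MonoidAlgebra.single_mul_single, one_mul,
      FreeMonoid.ofList_cons]

lemma lowSupp_monomial {j : ℕ} {w : List (Fin m)} (h : j ≤ w.length) :
    LowSupp j (magnusMonomial 2 m w) := by
  classical
  intro v hv
  rw [emb_monomial, MonoidAlgebra.coeff_single] at hv
  have := Finsupp.support_single_subset hv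
  simp only [Finset.mem_singleton] at this
  subst this
  exact h

lemma truncMk_monomial_zero {w : List (Fin m)} (h : 5 ≤ w.length) :
    truncMk 2 m 5 (magnusMonomial 2 m w) = 0 := by
  have hsplit : magnusMonomial 2 m w =
      magnusMonomial 2 m (w.take 5) * magnusMonomial 2 m (w.drop 5) := by
    rw [magnusMonomial, magnusMonomial, magnusMonomial, ← List.prod_append,
      ← List.map_append, List.take_append_drop]
  have h5 : (w.take 5).length = 5 := by
    rw [List.length_take]
    omega
  have hz : truncMk 2 m 5 (magnusMonomial 2 m (w.take 5)) = 0 := by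
    have := RingQuot.mkRingHom_rel (R := FreeAlgebra (ZMod 2) (Fin m))
      (r := truncRel 2 m 5) ⟨w.take 5, h5, rfl, rfl⟩
    simpa [truncMk] using this
  rw [hsplit, map_mul, hz, zero_mul]

lemma truncMk_smul (c : ZMod 2) (t : FreeAlgebra (ZMod 2) (Fin m)) :
    truncMk 2 m 5 (c • t) = c • truncMk 2 m 5 t := by
  have : truncMk 2 m 5 = (RingQuot.mkAlgHom (ZMod 2) (truncRel 2 m 5) :
      FreeAlgebra (ZMod 2) (Fin m) →+* TruncAlgebra 2 m 5) := by
    rw [RingQuot.mkAlgHom_coe]; rfl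
  rw [this]
  exact map_smul (RingQuot.mkAlgHom (ZMod 2) (truncRel 2 m 5)) c t

lemma truncMk_eq_zero {t : FreeAlgebra (ZMod 2) (Fin m)} (h : LowSupp 5 t) :
    truncMk 2 m 5 t = 0 := by
  classical
  have hrep : t = ∑ w ∈ (emb m t).coeff.support,
      ((emb m t).coeff w) • (emb m).symm (MonoidAlgebra.single w 1) := by
    apply (emb m).injective
    rw [map_sum]
    conv_lhs => rw [← MonoidAlgebra.sum_coeff_single (emb m t)]
    rw [Finsupp.sum]
    refine Finset.sum_congr rfl fun w _ => ?_
    rw [map_smul, AlgEquiv.apply_symm_apply, MonoidAlgebra.smul_single, smul_eq_mul, mul_one]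
  rw [hrep, map_sum]
  refine Finset.sum_eq_zero fun w hw => ?_
  have hsymm : (emb m).symm (MonoidAlgebra.single w 1) =
      magnusMonomial 2 m (FreeMonoid.toList w) := by
    apply (emb m).injective
    rw [AlgEquiv.apply_symm_apply, emb_monomial, FreeMonoid.ofList_toList]
  rw [hsymm, truncMk_smul, truncMk_monomial_zero (w := FreeMonoid.toList w) (h w hw), smul_zero]

/-- The ring congruence identifying elements with the same coefficients in
degrees `< 5`. -/
def lowCon (m : ℕ) : RingCon (MonoidAlgebra (ZMod 2) (FreeMonoid (Fin m))) where
  r a b := ∀ w ∈ (a - b).coeff.support, 5 ≤ FreeMonoid.length w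
  iseqv := by
    constructor
    · intro a w hw; simp at hw
    · intro a b h w hw
      apply h w
      have hab : a - b = -(b - a) := by abel
      rw [hab, MonoidAlgebra.coeff_neg, Finsupp.support_neg]
      exact hw
    · classical
      intro a b c hab hbc w hw
      have h' : a - c = (a - b) + (b - c) := by abel
      rw [h', MonoidAlgebra.coeff_add] at hw
      rcases Finset.mem_union.1 (Finsupp.support_add hw) with h | h
      · exact hab w h
      · exact hbc w h
  add' := by
    classical
    intro a b c d hab hcd w hw
    have h' : a + c - (b + d) = (a - b) + (c - d) := by abel
    rw [h', MonoidAlgebra.coeff_add] at hw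
    rcases Finset.mem_union.1 (Finsupp.support_add hw) with h | h
    · exact hab w h
    · exact hcd w h
  mul' := by
    classical
    intro a b c d hab hcd w hw
    have h' : a * c - b * d = (a - b) * c + b * (c - d) := by noncomm_ring
    rw [h', MonoidAlgebra.coeff_add] at hw
    rcases Finset.mem_union.1 (Finsupp.support_add hw) with h | h
    · obtain ⟨x, hx, y, _, rfl⟩ := Finset.mem_mul.1 (MonoidAlgebra.support_coeff_mul_subset _ _ h)
      rw [FreeMonoid.length_mul]
      have := hab x hx
      omega
    · obtain ⟨x, _, y, hy, rfl⟩ := Finset.mem_mul.1 (MonoidAlgebra.support_coeff_mul_subset _ _ h)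
      rw [FreeMonoid.length_mul]
      have := hcd y hy
      omega

/-- Low-degree coefficients are well defined on the truncated algebra. -/
noncomputable def lowProj (m : ℕ) : TruncAlgebra 2 m 5 →+* (lowCon m).Quotient :=
  RingQuot.lift ⟨(lowCon m).mk'.comp (emb m : FreeAlgebra (ZMod 2) (Fin m) →+*
      MonoidAlgebra (ZMod 2) (FreeMonoid (Fin m))), by
    rintro a b ⟨w, hw, rfl, rfl⟩
    have : lowCon m (emb m (magnusMonomial 2 m w)) (emb m 0) := by
      classical
      intro v hv
      rw [emb_monomial, map_zero, sub_zero, MonoidAlgebra.coeff_single] at hv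
      have := Finsupp.support_single_subset hv
      simp only [Finset.mem_singleton] at this
      subst this
      exact le_of_eq hw.symm
    exact (RingCon.eq _).2 this⟩

lemma coeff_congr {t t' : FreeAlgebra (ZMod 2) (Fin m)}
    (h : truncMk 2 m 5 t = truncMk 2 m 5 t') {w : FreeMonoid (Fin m)}
    (hw : FreeMonoid.length w < 5) : (emb m t).coeff w = (emb m t').coeff w := by
  have h2 := congrArg (lowProj m) h
  rw [truncMk, lowProj, RingQuot.lift_mkRingHom_apply, RingQuot.lift_mkRingHom_apply] at h2
  have h3 : lowCon m (emb m t) (emb m t') := (RingCon.eq _).1 h2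
  classical
  by_contra hne
  have : w ∈ (emb m t - emb m t').coeff.support := by
    rw [MonoidAlgebra.coeff_sub, Finsupp.mem_support_iff, Finsupp.sub_apply]
    exact sub_ne_zero.2 hne
  exact absurd (h3 w this) (by omega)

lemma lowSupp_apply_eq_zero {j : ℕ} {t : FreeAlgebra (ZMod 2) (Fin m)}
    (h : LowSupp j t) {w : FreeMonoid (Fin m)} (hw : FreeMonoid.length w < j) :
    (emb m t).coeff w = 0 := by
  by_contra hne
  exact absurd (h w (Finsupp.mem_support_iff.2 hne)) (by omega)

lemma units_inv_coe {M : Type*} [Monoid M] (u : Mˣ) (x : M) (h : ↑u * x = 1) :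
    (↑u⁻¹ : M) = x := by
  calc (↑u⁻¹ : M) = ↑u⁻¹ * (↑u * x) := by rw [h, mul_one]
  _ = x := by rw [← mul_assoc, Units.inv_mul, one_mul]

end MagnusAux
namespace MagnusAux

variable {m : ℕ}

lemma magnus_of (i : Fin m) :
    (↑(magnus 2 m 5 (FreeGroup.of i)) : TruncAlgebra 2 m 5)
      = 1 + truncMk 2 m 5 (FreeAlgebra.ι (ZMod 2) i) := by
  simp [magnus, FreeGroup.lift_apply_of]

lemma lowSupp_ι (i : Fin m) : LowSupp 1 (FreeAlgebra.ι (ZMod 2) i) := by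
  classical
  intro w hw
  rw [emb_ι, MonoidAlgebra.coeff_single] at hw
  have := Finsupp.support_single_subset hw
  simp only [Finset.mem_singleton] at this
  subst this
  simp [FreeMonoid.length_of]

/-- The subgroup of `F_m` whose Magnus expansion is `1 +` (terms of degree `≥ j+1`). -/
def Dgrp (m j : ℕ) : Subgroup (FreeGroup (Fin m)) where
  carrier := {r | ∃ t, LowSupp (j + 1) t ∧
      (↑(magnus 2 m 5 r) : TruncAlgebra 2 m 5) = 1 + truncMk 2 m 5 t}
  one_mem' := ⟨0, lowSupp_zero _, by simp⟩
  mul_mem' := by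
    rintro r s ⟨t, ht, et⟩ ⟨u, hu, eu⟩
    refine ⟨t + u + t * u, (ht.add hu).add ((ht.mul hu).mono (by omega)), ?_⟩
    rw [map_mul, Units.val_mul, et, eu, map_add, map_add, map_mul]
    noncomm_ring
  inv_mem' := by
    rintro r ⟨t, ht, et⟩
    have ht1 : LowSupp 1 t := ht.mono (by omega)
    refine ⟨-t + t^2 - t^3 + t^4,
      ((ht.neg.add ((ht.pow 2).mono (by omega))).sub ((ht.pow 3).mono (by omega))).add
        ((ht.pow 4).mono (by omega)), ?_⟩
    rw [map_inv]
    apply units_inv_coe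
    rw [et]
    have h5 : truncMk 2 m 5 (t^5) = 0 := truncMk_eq_zero ((ht1.pow 5).mono (by omega))
    have e1 : (1 + truncMk 2 m 5 t) * (1 + truncMk 2 m 5 (-t + t^2 - t^3 + t^4))
        = truncMk 2 m 5 ((1 + t) * (1 + (-t + t^2 - t^3 + t^4))) := by
      simp only [map_mul, map_add, map_one]
    have e2 : (1 + t) * (1 + (-t + t^2 - t^3 + t^4)) = 1 + t^5 := by noncomm_ring
    rw [e1, e2, map_add, map_one, h5, add_zero]

lemma mem_Dgrp_zero (r : FreeGroup (Fin m)) : r ∈ Dgrp m 0 := by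
  have h : (⊤ : Subgroup (FreeGroup (Fin m))) ≤ Dgrp m 0 := by
    rw [← FreeGroup.closure_range_of]
    refine (Subgroup.closure_le _).2 ?_
    rintro x ⟨i, rfl⟩
    exact ⟨FreeAlgebra.ι (ZMod 2) i, lowSupp_ι i, magnus_of i⟩
  exact h trivial

lemma comm_identity {S : Type*} [Ring S] (A B A' B' : S) (hA : A * A' = 1)
    (hB : B * B' = 1) :
    A * B * A' * B' = 1 + (A * B - B * A) * (A' * B') := by
  have h2 : B * A * (A' * B') = 1 := by
    rw [mul_assoc B A, ← mul_assoc A A' B', hA, one_mul, hB]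
  calc A * B * A' * B' = A * B * (A' * B') := by rw [mul_assoc]
    _ = 1 + (A * B * (A' * B') - B * A * (A' * B')) := by rw [h2]; noncomm_ring
    _ = 1 + (A * B - B * A) * (A' * B') := by rw [sub_mul]

open scoped commutatorElement in
lemma commutator_mem {i j : ℕ} {r s : FreeGroup (Fin m)} (hr : r ∈ Dgrp m i)
    (hs : s ∈ Dgrp m j) : ⁅r, s⁆ ∈ Dgrp m (i + j + 1) := by
  obtain ⟨t', ht', et'⟩ := (Dgrp m i).inv_mem hr
  obtain ⟨u', hu', eu'⟩ := (Dgrp m j).inv_mem hs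
  obtain ⟨t, ht, et⟩ := hr
  obtain ⟨u, hu, eu⟩ := hs
  rw [map_inv] at et' eu'
  refine ⟨((1 + t) * (1 + u) - (1 + u) * (1 + t)) * ((1 + t') * (1 + u')), ?_, ?_⟩
  · have hsub : (1 + t) * (1 + u) - (1 + u) * (1 + t) = t * u - u * t := by noncomm_ring
    rw [hsub]
    have h1 : LowSupp (i + 1 + (j + 1)) (t * u - u * t) := by
      refine (ht.mul hu).sub ?_
      have := hu.mul ht
      rwa [Nat.add_comm] at this
    have h2 := h1.mul (lowSupp_trivial ((1 + t') * (1 + u')))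
    exact h2.mono (by omega)
  · rw [commutatorElement_def, map_mul, map_mul, map_mul, map_inv, map_inv,
      Units.val_mul, Units.val_mul, Units.val_mul]
    have hA : (↑(magnus 2 m 5 r) : TruncAlgebra 2 m 5) * ↑(magnus 2 m 5 r)⁻¹ = 1 :=
      Units.mul_inv _
    have hB : (↑(magnus 2 m 5 s) : TruncAlgebra 2 m 5) * ↑(magnus 2 m 5 s)⁻¹ = 1 :=
      Units.mul_inv _
    rw [comm_identity _ _ _ _ hA hB, et, eu, et', eu']
    congr 1
    rw [map_mul, map_sub, map_mul, map_mul, map_mul, map_add, map_add, map_add,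
      map_add, map_one]

lemma lcs_le : ∀ n : ℕ, Subgroup.lowerCentralSeries (⊤ : Subgroup (FreeGroup (Fin m))) n ≤ Dgrp m n
  | 0 => fun r _ => mem_Dgrp_zero r
  | n + 1 => by
    rw [Subgroup.lowerCentralSeries_succ]
    refine Subgroup.commutator_le.2 fun g hg h _ => ?_
    exact commutator_mem (lcs_le n hg) (mem_Dgrp_zero h)

lemma magnus_gamma5 {r : FreeGroup (Fin m)}
    (h : r ∈ Subgroup.lowerCentralSeries (⊤ : Subgroup (FreeGroup (Fin m))) 4) : magnus 2 m 5 r = 1 := by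
  obtain ⟨t, ht, et⟩ := lcs_le 4 h
  have hz : truncMk 2 m 5 t = 0 := truncMk_eq_zero ht
  apply Units.ext
  rw [et, hz, add_zero, Units.val_one]

end MagnusAux
namespace MagnusAux

variable {m : ℕ}

/-- The symmetric degree-4 polynomial attached to a coefficient function. -/
noncomputable def goodPoly (c : (Fin 4 → Fin m) → ZMod 2) :
    FreeAlgebra (ZMod 2) (Fin m) :=
  ∑ f : Fin 4 → Fin m, c f • magnusMonomial 2 m (List.ofFn f)

lemma lowSupp_goodPoly (c : (Fin 4 → Fin m) → ZMod 2) : LowSupp 4 (goodPoly c) :=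
  lowSupp_sum _ _ fun f _ =>
    (lowSupp_monomial (le_of_eq (List.length_ofFn).symm)).smul (c f)

/-- A unit of `A_5` is good if it is `1 +` a symmetric degree-4 polynomial. -/
def Good (m : ℕ) (u : (TruncAlgebra 2 m 5)ˣ) : Prop :=
  ∃ c : (Fin 4 → Fin m) → ZMod 2, (∀ (f : Fin 4 → Fin m) (σ : Equiv.Perm (Fin 4)),
    c (f ∘ σ) = c f) ∧
    (↑u : TruncAlgebra 2 m 5) = 1 + truncMk 2 m 5 (goodPoly c)

lemma good_one : Good m 1 := by
  refine ⟨0, by simp, ?_⟩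
  simp [goodPoly]

lemma Good.mul {u v : (TruncAlgebra 2 m 5)ˣ} (hu : Good m u) (hv : Good m v) :
    Good m (u * v) := by
  obtain ⟨c, hc, ec⟩ := hu
  obtain ⟨d, hd, ed⟩ := hv
  refine ⟨fun f => c f + d f, fun f σ => by show c (f ∘ σ) + d (f ∘ σ) = c f + d f; rw [hc, hd], ?_⟩
  have hgp : goodPoly (fun f => c f + d f) = goodPoly c + goodPoly d := by
    simp [goodPoly, add_smul, Finset.sum_add_distrib]
  have h0 : truncMk 2 m 5 (goodPoly c * goodPoly d) = 0 :=
    truncMk_eq_zero (((lowSupp_goodPoly c).mul (lowSupp_goodPoly d)).mono (by omega))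
  rw [Units.val_mul, ec, ed, hgp, map_add]
  have : (1 + truncMk 2 m 5 (goodPoly c)) * (1 + truncMk 2 m 5 (goodPoly d))
      = 1 + (truncMk 2 m 5 (goodPoly c) + truncMk 2 m 5 (goodPoly d))
        + truncMk 2 m 5 (goodPoly c) * truncMk 2 m 5 (goodPoly d) := by noncomm_ring
  rw [this, ← map_mul, h0, add_zero]

lemma Good.inv {u : (TruncAlgebra 2 m 5)ˣ} (hu : Good m u) : Good m u⁻¹ := by
  obtain ⟨c, hc, ec⟩ := hu
  have hgp2 : goodPoly c + goodPoly c = 0 := by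
    rw [← two_smul (ZMod 2) (goodPoly c), show (2 : ZMod 2) = 0 by decide, zero_smul]
  have h0 : truncMk 2 m 5 (goodPoly c * goodPoly c) = 0 :=
    truncMk_eq_zero (((lowSupp_goodPoly c).mul (lowSupp_goodPoly c)).mono (by omega))
  have hsq : (↑u : TruncAlgebra 2 m 5) * ↑u = 1 := by
    rw [ec]
    have : (1 + truncMk 2 m 5 (goodPoly c)) * (1 + truncMk 2 m 5 (goodPoly c))
        = 1 + truncMk 2 m 5 (goodPoly c + goodPoly c)
          + truncMk 2 m 5 (goodPoly c * goodPoly c) := by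
      rw [map_add, map_mul]; noncomm_ring
    rw [this, hgp2, map_zero, add_zero, h0, add_zero]
  exact ⟨c, hc, by rw [units_inv_coe u (↑u) hsq, ec]⟩

lemma Good.conj (g : FreeGroup (Fin m)) {u : (TruncAlgebra 2 m 5)ˣ} (hu : Good m u) :
    Good m (magnus 2 m 5 g * u * (magnus 2 m 5 g)⁻¹) := by
  obtain ⟨s, hs, es⟩ := mem_Dgrp_zero (m := m) g
  obtain ⟨s', hs', es'⟩ := (Dgrp m 0).inv_mem (mem_Dgrp_zero g)
  rw [map_inv] at es'
  obtain ⟨c, hc, ec⟩ := hu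
  refine ⟨c, hc, ?_⟩
  rw [Units.val_mul, Units.val_mul, es, ec, es']
  have hv : (1 + truncMk 2 m 5 s) * (1 + truncMk 2 m 5 s') = 1 := by
    rw [← es, ← es']; exact Units.mul_inv _
  have step1 : (1 + truncMk 2 m 5 s) * (1 + truncMk 2 m 5 (goodPoly c))
        * (1 + truncMk 2 m 5 s')
      = (1 + truncMk 2 m 5 s) * (1 + truncMk 2 m 5 s')
        + (1 + truncMk 2 m 5 s) * truncMk 2 m 5 (goodPoly c)
          * (1 + truncMk 2 m 5 s') := by noncomm_ring
  have step2 : (1 + truncMk 2 m 5 s) * truncMk 2 m 5 (goodPoly c)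
        * (1 + truncMk 2 m 5 s')
      = truncMk 2 m 5 ((1 + s) * goodPoly c * (1 + s')) := by
    simp only [map_mul, map_add, map_one]
  have hdiff : (1 + s) * goodPoly c * (1 + s') - goodPoly c
      = s * goodPoly c + (goodPoly c * s' + s * goodPoly c * s') := by noncomm_ring
  have h0 : truncMk 2 m 5 ((1 + s) * goodPoly c * (1 + s') - goodPoly c) = 0 := by
    refine truncMk_eq_zero ?_
    rw [hdiff]
    exact LowSupp.add ((hs.mul (lowSupp_goodPoly c)).mono (by omega))
      (LowSupp.add (((lowSupp_goodPoly c).mul hs').mono (by omega))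
        (((hs.mul (lowSupp_goodPoly c)).mul hs').mono (by omega)))
  rw [map_sub, sub_eq_zero] at h0
  rw [step1, hv, step2, h0]

/-- Expansion of powers of a linear form. -/
lemma sum_smul_pow (ℓ : Fin m → ZMod 2) :
    ∀ n : ℕ, (∑ i, ℓ i • FreeAlgebra.ι (ZMod 2) i) ^ n
      = ∑ f : Fin n → Fin m, (∏ j, ℓ (f j)) • magnusMonomial 2 m (List.ofFn f)
  | 0 => by
    rw [pow_zero, Finset.univ_unique, Finset.sum_singleton]
    simp [magnusMonomial]
  | n + 1 => by
    rw [pow_succ', sum_smul_pow ℓ n, Finset.sum_mul_sum]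
    rw [← Equiv.sum_comp (Fin.consEquiv (fun _ : Fin (n + 1) => Fin m))
      (fun g : Fin (n + 1) → Fin m =>
        (∏ j, ℓ (g j)) • magnusMonomial 2 m (List.ofFn g)), Fintype.sum_prod_type]
    refine Finset.sum_congr rfl fun i _ => Finset.sum_congr rfl fun f _ => ?_
    rw [smul_mul_smul_comm]
    have h1 : List.ofFn (Fin.consEquiv (fun _ : Fin (n + 1) => Fin m) (i, f))
        = i :: List.ofFn f := by
      rw [List.ofFn_succ]
      simp [Fin.consEquiv]
    have h2 : (∏ j, ℓ ((Fin.consEquiv (fun _ : Fin (n + 1) => Fin m) (i, f)) j))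
        = ℓ i * ∏ j, ℓ (f j) := by
      rw [Fin.prod_univ_succ]
      simp [Fin.consEquiv]
    rw [h1, h2]
    simp [magnusMonomial]

end MagnusAux
namespace MagnusAux

variable {m : ℕ}

lemma good_pow (w : FreeGroup (Fin m)) : Good m ((magnus 2 m 5 w) ^ 4) := by
  classical
  obtain ⟨t, ht, et⟩ := mem_Dgrp_zero (m := m) w
  set ℓ : Fin m → ZMod 2 := fun i => (emb m t).coeff (FreeMonoid.of i) with hℓ
  set t₁ : FreeAlgebra (ZMod 2) (Fin m) := ∑ i, ℓ i • FreeAlgebra.ι (ZMod 2) i with ht₁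
  have ht1low : LowSupp 1 t₁ :=
    lowSupp_sum _ _ fun i _ => (lowSupp_ι i).smul (ℓ i)
  -- the coefficients of `t₁`
  have hembt₁ : emb m t₁ = ∑ i, ℓ i • MonoidAlgebra.single (FreeMonoid.of i) 1 := by
    rw [ht₁, map_sum]
    exact Finset.sum_congr rfl fun i _ => by rw [map_smul, emb_ι]
  -- `t` and `t₁` agree in degrees < 2
  have hsub : LowSupp 2 (t - t₁) := by
    intro v hv
    by_contra hlen
    push_neg at hlen
    apply Finsupp.mem_support_iff.1 hv
    rw [map_sub, MonoidAlgebra.coeff_sub, Finsupp.sub_apply]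
    have hvlist : FreeMonoid.ofList (FreeMonoid.toList v) = v := rfl
    have hlen' : (FreeMonoid.toList v).length < 2 := hlen
    rcases hl : FreeMonoid.toList v with _ | ⟨i, tl⟩
    · -- v = 1
      have hv1 : v = (1 : FreeMonoid (Fin m)) := by
        rw [← hvlist, hl]; rfl
      subst hv1
      have h1 : (emb m t).coeff (1 : FreeMonoid (Fin m)) = 0 :=
        lowSupp_apply_eq_zero ht (by simp [FreeMonoid.length_one])
      have h2 : (emb m t₁).coeff (1 : FreeMonoid (Fin m)) = 0 := by
        rw [hembt₁, MonoidAlgebra.coeff_sum, Finsupp.finset_sum_apply]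
        refine Finset.sum_eq_zero fun i _ => ?_
        rw [MonoidAlgebra.coeff_smul, Finsupp.smul_apply, MonoidAlgebra.coeff_single, Finsupp.single_eq_of_ne', smul_zero]
        intro hcon
        have := congrArg FreeMonoid.length hcon
        simp [FreeMonoid.length_of, FreeMonoid.length_one] at this
      rw [h1, h2, sub_zero]
    · rcases tl with _ | ⟨i', tl'⟩
      · -- v = of i
        have hvof : v = FreeMonoid.of i := by
          rw [← hvlist, hl]; rfl
        subst hvof
        have h2 : (emb m t₁).coeff (FreeMonoid.of i) = ℓ i := by
          rw [hembt₁, MonoidAlgebra.coeff_sum, Finsupp.finset_sum_apply]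
          rw [Finset.sum_eq_single i]
          · rw [MonoidAlgebra.coeff_smul, Finsupp.smul_apply, MonoidAlgebra.coeff_single, Finsupp.single_eq_same, smul_eq_mul, mul_one]
          · intro i' _ hne
            rw [MonoidAlgebra.coeff_smul, Finsupp.smul_apply, MonoidAlgebra.coeff_single, Finsupp.single_eq_of_ne', smul_zero]
            exact fun hcon => hne (FreeMonoid.of_injective hcon)
          · intro h; exact absurd (Finset.mem_univ i) h
        rw [h2, hℓ, sub_self]
      · -- length ≥ 2, contradiction
        exfalso
        rw [hl] at hlen'
        simp only [List.length_cons] at hlen'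
        omega
  -- telescoping: t⁴ and t₁⁴ agree in A₅
  have htele : t ^ 4 - t₁ ^ 4 = (t - t₁) * t ^ 3 + (t₁ * ((t - t₁) * t ^ 2)
      + (t₁ ^ 2 * ((t - t₁) * t) + t₁ ^ 3 * (t - t₁))) := by noncomm_ring
  have ht1 : LowSupp 1 t := ht
  have h0 : truncMk 2 m 5 (t ^ 4 - t₁ ^ 4) = 0 := by
    refine truncMk_eq_zero ?_
    rw [htele]
    exact LowSupp.add ((hsub.mul (ht1.pow 3)).mono (by omega))
      (LowSupp.add ((ht1low.mul (hsub.mul (ht1.pow 2))).mono (by omega))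
        (LowSupp.add (((ht1low.pow 2).mul (hsub.mul ht1)).mono (by omega))
          (((ht1low.pow 3).mul hsub).mono (by omega))))
  rw [map_sub, sub_eq_zero] at h0
  -- assemble
  refine ⟨fun f => ∏ j, ℓ (f j), ?_, ?_⟩
  · intro f σ
    show (∏ j, ℓ (f (σ j))) = ∏ j, ℓ (f j)
    exact Equiv.prod_comp σ fun j => ℓ (f j)
  · have hchar : ∀ x : TruncAlgebra 2 m 5, x + x = 0 := by
      intro x
      rw [← two_smul (ZMod 2) x, show (2 : ZMod 2) = 0 by decide, zero_smul]
    have hsq : ∀ x : TruncAlgebra 2 m 5, (1 + x) ^ 2 = 1 + x ^ 2 := by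
      intro x
      have h1 : (1 + x) ^ 2 = 1 + (x + x) + x ^ 2 := by noncomm_ring
      rw [h1, hchar, add_zero]
    have h4 : (1 + truncMk 2 m 5 t) ^ 4 = 1 + (truncMk 2 m 5 t) ^ 4 := by
      rw [show (4 : ℕ) = 2 * 2 from rfl, pow_mul, hsq, hsq, ← pow_mul]
    rw [Units.val_pow_eq_pow_val, et, h4, ← map_pow, h0]
    congr 1
    exact congrArg (truncMk 2 m 5) (sum_smul_pow ℓ 4)

end MagnusAux
namespace MagnusAux

/-- The subgroup of elements with good Magnus expansion. -/
def Hgrp (m : ℕ) : Subgroup (FreeGroup (Fin m)) where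
  carrier := {r | Good m (magnus 2 m 5 r)}
  one_mem' := by
    show Good m (magnus 2 m 5 1)
    rw [map_one]
    exact good_one
  mul_mem' := by
    intro a b ha hb
    show Good m (magnus 2 m 5 (a * b))
    rw [map_mul]
    exact Good.mul ha hb
  inv_mem' := by
    intro a ha
    show Good m (magnus 2 m 5 a⁻¹)
    rw [map_inv]
    exact Good.inv ha

instance hgrp_normal (m : ℕ) : (Hgrp m).Normal := by
  constructor
  intro r hr g
  show Good m (magnus 2 m 5 (g * r * g⁻¹))
  rw [map_mul, map_mul, map_inv]
  exact Good.conj g hr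

lemma mem_Hgrp {m : ℕ} {r : FreeGroup (Fin m)} (hr : r ∈ WbarGamma m 4 5) :
    Good m (magnus 2 m 5 r) := by
  have hle : WbarGamma m 4 5 ≤ Hgrp m := by
    rw [WbarGamma]
    apply sup_le
    · apply Subgroup.normalClosure_le_normal
      rintro x ⟨w, rfl⟩
      show Good m (magnus 2 m 5 (w ^ 4))
      rw [map_pow]
      exact good_pow w
    · intro x hx
      show Good m (magnus 2 m 5 x)
      rw [magnus_gamma5 hx]
      exact good_one
  exact hle hr

end MagnusAux
/-- Let `m` be a positive integer.  If `r ∈ W̄_4 · γ_5 F_m`, then in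
`A_5` over `ℤ/2ℤ` one has `E^2(r) = 1 + Σ c(i₁,i₂,i₃,i₄) X_{i₁}X_{i₂}X_{i₃}X_{i₄}` with
coefficients symmetric under all permutations of `{1,2,3,4}`; in particular all
homogeneous components of `E^2(r)` of degrees `1`, `2` and `3` vanish. -/
theorem magnus_of_mem_WbarGamma_four (m : ℕ) (hm : 0 < m)
    (r : FreeGroup (Fin m)) (hr : r ∈ WbarGamma m 4 5) :
    ∃ c : (Fin 4 → Fin m) → ZMod 2,
      (∀ (f : Fin 4 → Fin m) (σ : Equiv.Perm (Fin 4)), c (f ∘ σ) = c f) ∧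
      (↑(magnus 2 m 5 r) : TruncAlgebra 2 m 5) =
        1 + ∑ f : Fin 4 → Fin m,
          c f • truncMk 2 m 5 (magnusMonomial 2 m (List.ofFn f)) ∧
      (∀ w : List (Fin m), 1 ≤ w.length → w.length ≤ 3 →
        ∀ t : FreeAlgebra (ZMod 2) (Fin m),
          truncMk 2 m 5 t = ↑(magnus 2 m 5 r) →
            magnusCoeff 2 m w t = 0) := by
  obtain ⟨c, hc, ec⟩ := MagnusAux.mem_Hgrp hr
  refine ⟨c, hc, ?_, ?_⟩
  · rw [ec]
    congr 1
    rw [MagnusAux.goodPoly, map_sum]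
    exact Finset.sum_congr rfl fun f _ => MagnusAux.truncMk_smul _ _
  · intro w h1 h3 t ht
    have htt : truncMk 2 m 5 t = truncMk 2 m 5 (1 + MagnusAux.goodPoly c) := by
      rw [ht, ec, map_add, map_one]
    have hlen : FreeMonoid.length (FreeMonoid.ofList w) = w.length := rfl
    have hcoeff := MagnusAux.coeff_congr htt (w := FreeMonoid.ofList w) (by omega)
    show (MagnusAux.emb m t).coeff (FreeMonoid.ofList w) = 0
    rw [hcoeff, map_add, MonoidAlgebra.coeff_add, Finsupp.add_apply]
    have hgp : (MagnusAux.emb m (MagnusAux.goodPoly c)).coeff (FreeMonoid.ofList w) = 0 :=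
      MagnusAux.lowSupp_apply_eq_zero (MagnusAux.lowSupp_goodPoly c) (by omega)
    have hone : (MagnusAux.emb m (1 : FreeAlgebra (ZMod 2) (Fin m))).coeff
        (FreeMonoid.ofList w) = 0 := by
      rw [map_one, MonoidAlgebra.one_def, MonoidAlgebra.coeff_single]
      refine Finsupp.single_eq_of_ne' ?_
      intro hcon
      have := congrArg FreeMonoid.length hcon
      rw [hlen, FreeMonoid.length_one] at this
      omega
    rw [hgp, hone, add_zero]
end

section
/- There exists an index i ∈ {1, …, 5} such that the element r_i ∈ F_5 does not belong to the subgroup W̄_4 · γ_5 F_5 (because some term of degree 3 survives in the Magnus ℤ_2-expansion E^2(r_i)). -/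
set_option maxRecDepth 100000


/-- The generators `x_1, …, x_5` of the free group `F_5` (`xF5 i` is `x_{i+1}`). -/
def xF5 (i : Fin 5) : FreeGroup (Fin 5) := FreeGroup.of i

/-- `Q_i = x_1x_2⁻¹x_3x_4⁻¹x_5x_1⁻¹x_2x_3⁻¹x_4x_5⁻¹ · x_i ·
x_5⁻¹x_4x_3⁻¹x_2x_1⁻¹x_5x_4⁻¹x_3x_2⁻¹x_1 ∈ F_5`. -/
def QF5 (i : Fin 5) : FreeGroup (Fin 5) :=
  xF5 0 * (xF5 1)⁻¹ * xF5 2 * (xF5 3)⁻¹ * xF5 4 *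
  (xF5 0)⁻¹ * xF5 1 * (xF5 2)⁻¹ * xF5 3 * (xF5 4)⁻¹ *
  xF5 i *
  (xF5 4)⁻¹ * xF5 3 * (xF5 2)⁻¹ * xF5 1 * (xF5 0)⁻¹ *
  xF5 4 * (xF5 3)⁻¹ * xF5 2 * (xF5 1)⁻¹ * xF5 0

/-- `r_i = Q_i x_i⁻¹`, the relators of the associated core group of the closure of
the 5-braid `(σ₁σ₂σ₃σ₄)^{10}`. -/
def rF5 (i : Fin 5) : FreeGroup (Fin 5) := QF5 i * (xF5 i)⁻¹

/-! ### The group of unipotent upper-triangular 4×4 matrices over `ZMod 2`.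

An element `⟨a,b,c,d,e,f⟩` represents the matrix
`![![1,a,b,c], ![0,1,d,e], ![0,0,1,f], ![0,0,0,1]]`.
This group has exponent dividing 4 and nilpotency class 3, so any
homomorphism from `F_5` to it kills `W̄_4 · γ_5 F_5`. -/

structure UT : Type where
  a : ZMod 2
  b : ZMod 2
  c : ZMod 2
  d : ZMod 2
  e : ZMod 2
  f : ZMod 2
  deriving DecidableEq

namespace UT

open scoped commutatorElement

def prodEquiv : (ZMod 2 × ZMod 2 × ZMod 2 × ZMod 2 × ZMod 2 × ZMod 2) ≃ UT where
  toFun p := ⟨p.1, p.2.1, p.2.2.1, p.2.2.2.1, p.2.2.2.2.1, p.2.2.2.2.2⟩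
  invFun x := (x.a, x.b, x.c, x.d, x.e, x.f)
  left_inv p := rfl
  right_inv x := rfl

instance : Fintype UT := Fintype.ofEquiv _ prodEquiv

def mul' (x y : UT) : UT :=
  ⟨x.a + y.a, x.b + y.b + x.a * y.d, x.c + y.c + x.a * y.e + x.b * y.f,
   x.d + y.d, x.e + y.e + x.d * y.f, x.f + y.f⟩

def inv' (x : UT) : UT :=
  ⟨x.a, x.b + x.a * x.d, x.c + x.a * x.e + x.a * x.d * x.f + x.b * x.f,
   x.d, x.e + x.d * x.f, x.f⟩

instance : Group UT where
  mul := mul'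
  one := ⟨0, 0, 0, 0, 0, 0⟩
  inv := inv'
  mul_assoc x y z := by
    obtain ⟨a, b, c, d, e, f⟩ := x
    obtain ⟨a', b', c', d', e', f'⟩ := y
    obtain ⟨a'', b'', c'', d'', e'', f''⟩ := z
    show mul' (mul' _ _) _ = mul' _ (mul' _ _)
    simp only [mul', mk.injEq]
    refine ⟨by ring, by ring, by ring, by ring, by ring, by ring⟩
  one_mul x := by
    obtain ⟨a, b, c, d, e, f⟩ := x
    show mul' ⟨0, 0, 0, 0, 0, 0⟩ _ = _
    simp only [mul', mk.injEq]
    refine ⟨by ring, by ring, by ring, by ring, by ring, by ring⟩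
  mul_one x := by
    obtain ⟨a, b, c, d, e, f⟩ := x
    show mul' _ ⟨0, 0, 0, 0, 0, 0⟩ = _
    simp only [mul', mk.injEq]
    refine ⟨by ring, by ring, by ring, by ring, by ring, by ring⟩
  inv_mul_cancel x := by revert x; decide

lemma pow_four (g : UT) : g ^ 4 = 1 := by revert g; decide

/-- Elements all of whose degree-1 entries vanish. -/
def S2 : Subgroup UT where
  carrier := {x | x.a = 0 ∧ x.d = 0 ∧ x.f = 0}
  one_mem' := by decide
  mul_mem' := by
    intro x y hx hy
    revert hx hy; revert x y
    decide
  inv_mem' := by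
    intro x hx
    revert hx; revert x
    decide

/-- The center: only the corner entry may be nonzero. -/
def S3 : Subgroup UT where
  carrier := {x | x.a = 0 ∧ x.b = 0 ∧ x.d = 0 ∧ x.e = 0 ∧ x.f = 0}
  one_mem' := by decide
  mul_mem' := by
    intro x y hx hy
    revert hx hy; revert x y
    decide
  inv_mem' := by
    intro x hx
    revert hx; revert x
    decide

instance : DecidablePred (· ∈ S2) := fun x =>
  inferInstanceAs (Decidable (x.a = 0 ∧ x.d = 0 ∧ x.f = 0))

instance : DecidablePred (· ∈ S3) := fun x =>
  inferInstanceAs (Decidable (x.a = 0 ∧ x.b = 0 ∧ x.d = 0 ∧ x.e = 0 ∧ x.f = 0))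

lemma comm_mem_S2 : ∀ g h : UT, ⁅g, h⁆ ∈ S2 := by decide

lemma comm_S2_mem_S3 : ∀ g ∈ S2, ∀ h : UT, ⁅g, h⁆ ∈ S3 := by decide

lemma comm_S3_eq_one : ∀ g ∈ S3, ∀ h : UT, ⁅g, h⁆ = 1 := by decide

lemma lcs_one_le : (⊤ : Subgroup UT).lowerCentralSeries 1 ≤ S2 := by
  show ⁅(⊤ : Subgroup UT).lowerCentralSeries 0, (⊤ : Subgroup UT)⁆ ≤ S2
  exact Subgroup.commutator_le.mpr fun g _ h _ => comm_mem_S2 g h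

lemma lcs_two_le : (⊤ : Subgroup UT).lowerCentralSeries 2 ≤ S3 := by
  show ⁅(⊤ : Subgroup UT).lowerCentralSeries 1, (⊤ : Subgroup UT)⁆ ≤ S3
  calc ⁅(⊤ : Subgroup UT).lowerCentralSeries 1, (⊤ : Subgroup UT)⁆
      ≤ ⁅S2, (⊤ : Subgroup UT)⁆ := Subgroup.commutator_mono lcs_one_le le_rfl
    _ ≤ S3 := Subgroup.commutator_le.mpr fun g hg h _ => comm_S2_mem_S3 g hg h

lemma lcs_three_eq_bot : (⊤ : Subgroup UT).lowerCentralSeries 3 = ⊥ := by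
  rw [eq_bot_iff]
  show ⁅(⊤ : Subgroup UT).lowerCentralSeries 2, (⊤ : Subgroup UT)⁆ ≤ ⊥
  calc ⁅(⊤ : Subgroup UT).lowerCentralSeries 2, (⊤ : Subgroup UT)⁆
      ≤ ⁅S3, (⊤ : Subgroup UT)⁆ := Subgroup.commutator_mono lcs_two_le le_rfl
    _ ≤ ⊥ := Subgroup.commutator_le.mpr fun g hg h _ =>
        Subgroup.mem_bot.mpr (comm_S3_eq_one g hg h)

lemma lcs_four_eq_bot : (⊤ : Subgroup UT).lowerCentralSeries 4 = ⊥ := by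
  rw [eq_bot_iff, ← lcs_three_eq_bot]
  exact (⊤ : Subgroup UT).lowerCentralSeries_antitone (by norm_num)

end UT

/-- The five chosen unipotent matrices. -/
def Mgen : Fin 5 → UT :=
  ![⟨1, 1, 0, 0, 1, 1⟩, ⟨1, 0, 0, 1, 1, 0⟩, ⟨1, 1, 1, 1, 0, 1⟩,
    ⟨1, 0, 1, 1, 0, 1⟩, ⟨0, 1, 1, 0, 1, 1⟩]

/-- The evaluation homomorphism `F_5 → UT`. -/
def phiUT : FreeGroup (Fin 5) →* UT := FreeGroup.lift Mgen

lemma phiUT_r0_ne_one : phiUT (rF5 0) ≠ 1 := by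
  simp only [rF5, QF5, xF5, map_mul, map_inv, phiUT, FreeGroup.lift_apply_of]
  decide

lemma WbarGamma_le_ker : WbarGamma 5 4 5 ≤ phiUT.ker := by
  rw [WbarGamma]
  apply sup_le
  · apply Subgroup.normalClosure_le_normal
    rintro x ⟨w, rfl⟩
    simp only [SetLike.mem_coe, MonoidHom.mem_ker, map_pow]
    exact UT.pow_four (phiUT w)
  · intro x hx
    have h : phiUT x ∈ (⊤ : Subgroup UT).lowerCentralSeries 4 :=
      Subgroup.lowerCentralSeries_mono 4 (le_top (a := (⊤ : Subgroup (FreeGroup (Fin 5))).map phiUT))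
        (show phiUT x ∈ ((⊤ : Subgroup (FreeGroup (Fin 5))).map phiUT).lowerCentralSeries 4 by
          rw [← Subgroup.map_lowerCentralSeries]; exact ⟨x, hx, rfl⟩)
    rw [UT.lcs_four_eq_bot, Subgroup.mem_bot] at h
    exact h

/-- There exists an index `i ∈ {1, …, 5}` such that `r_i ∈ F_5` does
not belong to the subgroup `W̄_4 · γ_5 F_5`. -/
theorem exists_rF5_not_mem_WbarGamma_four :
    ∃ i : Fin 5, rF5 i ∉ WbarGamma 5 4 5 := by
  refine ⟨0, fun hmem => ?_⟩
  exact phiUT_r0_ne_one (WbarGamma_le_ker hmem)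
end
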